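/- arXiv:2002.08948 — 2 statements merged into one kernel-verified Lean document; each statement's English description precedes it below -/
import Mathlib

section
/- Let X1, X2, X3, Y, U take values in finite sets and let the strictly positive joint distribution factorize as P(x1, x2, x3, y) = Σ_u P(u)·P(x3)·P(y|x3, u)·P(x1|u)·P(x2|y, x1), where U is unobserved and P(u), P(x3), P(y|x3,u), P(x1|u), P(x2|y,x1) are given conditional probability tables. Define the post-intervention distribution P_{x1}(x2, x3, y) = Σ_u P(u)·P(x3)·P(y|x3, u)·P(x2|y, x1) (the factorization with the term P(x1|u) deleted). Then P_{x1}(y | x2, x3) = P(y|x3)·P(x2|y, x1) / Σ_{y'} P(y'|x3)·P(x2|y', x1), where P(y|x3) and P(x2|y, x1) are the observational conditional distributions computed from the joint P(x1, x2, x3, y). -/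
/-! The data-generating process of the ADMG over observed variables `{X1, X2, X3, Y}` with
directed edges `X3 → Y`, `Y → X2`, `X1 → X2` and bidirected edge `Y ↔ X1`, the bidirected
edge being realized by a latent variable `U` with `U → X1` and `U → Y`. The variables take
values in the finite types `A1, A2, A3, AY, AU`. -/

noncomputable section

variable {A1 A2 A3 AY AU : Type}
variable [Fintype A1] [Fintype A2] [Fintype A3] [Fintype AY] [Fintype AU]
variable (pU : AU → ℝ) (pX3 : A3 → ℝ) (pY : AY → A3 → AU → ℝ)
variable (pX1 : A1 → AU → ℝ) (pX2 : A2 → AY → A1 → ℝ)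

/-- The observational joint distribution
`P(x1, x2, x3, y) = Σ_u P(u)·P(x3)·P(y|x3,u)·P(x1|u)·P(x2|y,x1)`. -/
def joint (x1 : A1) (x2 : A2) (x3 : A3) (y : AY) : ℝ :=
  ∑ u : AU, pU u * pX3 x3 * pY y x3 u * pX1 x1 u * pX2 x2 y x1

/-- The post-intervention distribution
`P_{x1}(x2, x3, y) = Σ_u P(u)·P(x3)·P(y|x3,u)·P(x2|y,x1)` (the factor `P(x1|u)` deleted). -/
def postInt (x1 : A1) (x2 : A2) (x3 : A3) (y : AY) : ℝ :=
  ∑ u : AU, pU u * pX3 x3 * pY y x3 u * pX2 x2 y x1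

/-- The observational conditional `P(y | x3)` computed from the joint. -/
def obsYgivenX3 (x3 : A3) (y : AY) : ℝ :=
  (∑ x1 : A1, ∑ x2 : A2, joint pU pX3 pY pX1 pX2 x1 x2 x3 y) /
    (∑ x1 : A1, ∑ x2 : A2, ∑ y' : AY, joint pU pX3 pY pX1 pX2 x1 x2 x3 y')

/-- The observational conditional `P(x2 | y, x1)` computed from the joint. -/
def obsX2givenYX1 (x2 : A2) (y : AY) (x1 : A1) : ℝ :=
  (∑ x3 : A3, joint pU pX3 pY pX1 pX2 x1 x2 x3 y) /
    (∑ x3 : A3, ∑ x2' : A2, joint pU pX3 pY pX1 pX2 x1 x2' x3 y)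

end

/-- Let `X1, X2, X3, Y, U` take values in finite sets, with strictly
positive joint distribution factorizing as
`P(x1,x2,x3,y) = Σ_u P(u)·P(x3)·P(y|x3,u)·P(x1|u)·P(x2|y,x1)` for given conditional
probability tables. Then the conditional of the post-intervention distribution
`P_{x1}(x2,x3,y)` (the factorization with `P(x1|u)` deleted) satisfies
`P_{x1}(y | x2, x3) = P(y|x3)·P(x2|y,x1) / Σ_{y'} P(y'|x3)·P(x2|y',x1)`, where `P(y|x3)`
and `P(x2|y,x1)` are the observational conditionals computed from the joint. -/
theorem do_conditional_eq_cidp_functional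
    {A1 A2 A3 AY AU : Type}
    [Fintype A1] [Fintype A2] [Fintype A3] [Fintype AY] [Fintype AU]
    (pU : AU → ℝ) (pX3 : A3 → ℝ) (pY : AY → A3 → AU → ℝ)
    (pX1 : A1 → AU → ℝ) (pX2 : A2 → AY → A1 → ℝ)
    (hU : ∑ u, pU u = 1) (hX3 : ∑ x3, pX3 x3 = 1)
    (hY : ∀ x3 u, ∑ y, pY y x3 u = 1) (hX1 : ∀ u, ∑ x1, pX1 x1 u = 1)
    (hX2 : ∀ y x1, ∑ x2, pX2 x2 y x1 = 1)
    (hUpos : ∀ u, 0 ≤ pU u) (hX3pos : ∀ x3, 0 ≤ pX3 x3)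
    (hYpos : ∀ y x3 u, 0 ≤ pY y x3 u) (hX1pos : ∀ x1 u, 0 ≤ pX1 x1 u)
    (hX2pos : ∀ x2 y x1, 0 ≤ pX2 x2 y x1)
    (hpos : ∀ x1 x2 x3 y, 0 < joint pU pX3 pY pX1 pX2 x1 x2 x3 y) :
    ∀ x1 x2 x3 y,
      postInt pU pX3 pY pX2 x1 x2 x3 y /
          (∑ y' : AY, postInt pU pX3 pY pX2 x1 x2 x3 y') =
        obsYgivenX3 pU pX3 pY pX1 pX2 x3 y * obsX2givenYX1 pU pX3 pY pX1 pX2 x2 y x1 /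
          ∑ y' : AY, obsYgivenX3 pU pX3 pY pX1 pX2 x3 y' *
            obsX2givenYX1 pU pX3 pY pX1 pX2 x2 y' x1 := by
  intro x1 x2 x3 y
  classical
  -- pointwise factorization of the joint
  have hjoint : ∀ (a1 : A1) (a2 : A2) (a3 : A3) (ay : AY),
      joint pU pX3 pY pX1 pX2 a1 a2 a3 ay
        = pX3 a3 * pX2 a2 ay a1 * ∑ u, pU u * pY ay a3 u * pX1 a1 u := by
    intro a1 a2 a3 ay
    simp only [joint, Finset.mul_sum]
    exact Finset.sum_congr rfl fun u _ => by ring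
  have hpost : ∀ ay : AY,
      postInt pU pX3 pY pX2 x1 x2 x3 ay
        = pX3 x3 * pX2 x2 ay x1 * ∑ u, pU u * pY ay x3 u := by
    intro ay
    simp only [postInt, Finset.mul_sum]
    exact Finset.sum_congr rfl fun u _ => by ring
  -- positivity facts
  have hsnn : ∀ (a1 : A1) (a3 : A3) (ay : AY), 0 ≤ ∑ u, pU u * pY ay a3 u * pX1 a1 u :=
    fun a1 a3 ay => Finset.sum_nonneg fun u _ =>
      mul_nonneg (mul_nonneg (hUpos u) (hYpos ay a3 u)) (hX1pos a1 u)
  have hqnn : ∀ (a3 : A3) (ay : AY), 0 ≤ ∑ u, pU u * pY ay a3 u :=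
    fun a3 ay => Finset.sum_nonneg fun u _ => mul_nonneg (hUpos u) (hYpos ay a3 u)
  have hfac : ∀ (a1 : A1) (a2 : A2) (a3 : A3) (ay : AY),
      0 < pX3 a3 ∧ 0 < pX2 a2 ay a1 ∧ 0 < ∑ u, pU u * pY ay a3 u * pX1 a1 u := by
    intro a1 a2 a3 ay
    have h := hpos a1 a2 a3 ay
    rw [hjoint] at h
    have h3 : 0 < pX3 a3 := by
      rcases (hX3pos a3).lt_or_eq with h' | h'
      · exact h'
      · rw [← h'] at h; simp at h
    have h2 : 0 < pX2 a2 ay a1 := by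
      rcases (hX2pos a2 ay a1).lt_or_eq with h' | h'
      · exact h'
      · rw [← h'] at h; simp at h
    have hs : 0 < ∑ u, pU u * pY ay a3 u * pX1 a1 u := by
      rcases (hsnn a1 a3 ay).lt_or_eq with h' | h'
      · exact h'
      · rw [← h'] at h; simp at h
    exact ⟨h3, h2, hs⟩
  have hpX3 : ∀ a3 : A3, 0 < pX3 a3 := fun a3 => (hfac x1 x2 a3 y).1
  have hpX2 : ∀ ay : AY, 0 < pX2 x2 ay x1 := fun ay => (hfac x1 x2 x3 ay).2.1
  have hq : ∀ ay : AY, 0 < ∑ u, pU u * pY ay x3 u := by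
    intro ay
    have hs := (hfac x1 x2 x3 ay).2.2
    have hle : (∑ u, pU u * pY ay x3 u * pX1 x1 u) ≤ ∑ u, pU u * pY ay x3 u := by
      apply Finset.sum_le_sum
      intro u _
      have h1 : pX1 x1 u ≤ 1 := by
        have := hX1 u
        calc pX1 x1 u ≤ ∑ a1, pX1 a1 u :=
              Finset.single_le_sum (fun a1 _ => hX1pos a1 u) (Finset.mem_univ x1)
          _ = 1 := this
      calc pU u * pY ay x3 u * pX1 x1 u ≤ pU u * pY ay x3 u * 1 := by
            apply mul_le_mul_of_nonneg_left h1 (mul_nonneg (hUpos u) (hYpos ay x3 u))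
        _ = pU u * pY ay x3 u := by ring
    linarith
  -- obsYgivenX3 simplifies to q
  have hnum1 : ∀ ay : AY,
      (∑ a1 : A1, ∑ a2 : A2, joint pU pX3 pY pX1 pX2 a1 a2 x3 ay)
        = pX3 x3 * ∑ u, pU u * pY ay x3 u := by
    intro ay
    have step1 : ∀ a1 : A1,
        (∑ a2 : A2, joint pU pX3 pY pX1 pX2 a1 a2 x3 ay)
          = pX3 x3 * ∑ u, pU u * pY ay x3 u * pX1 a1 u := by
      intro a1
      simp only [hjoint]
      rw [← Finset.sum_mul, show (∑ a2 : A2, pX3 x3 * pX2 a2 ay a1) = pX3 x3 by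
        rw [← Finset.mul_sum, hX2 ay a1, mul_one]]
    simp only [step1]
    rw [← Finset.mul_sum, Finset.sum_comm]
    congr 1
    apply Finset.sum_congr rfl
    intro u _
    rw [← Finset.mul_sum, hX1 u, mul_one]
  have hden1 :
      (∑ a1 : A1, ∑ a2 : A2, ∑ y' : AY, joint pU pX3 pY pX1 pX2 a1 a2 x3 y')
        = pX3 x3 := by
    rw [show (∑ a1 : A1, ∑ a2 : A2, ∑ y' : AY, joint pU pX3 pY pX1 pX2 a1 a2 x3 y')
          = ∑ y' : AY, ∑ a1 : A1, ∑ a2 : A2, joint pU pX3 pY pX1 pX2 a1 a2 x3 y' by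
        rw [show (∑ a1 : A1, ∑ a2 : A2, ∑ y' : AY, joint pU pX3 pY pX1 pX2 a1 a2 x3 y')
              = ∑ a1 : A1, ∑ y' : AY, ∑ a2 : A2, joint pU pX3 pY pX1 pX2 a1 a2 x3 y' from
          Finset.sum_congr rfl (fun a1 _ => Finset.sum_comm)]
        exact Finset.sum_comm]
    simp only [hnum1]
    rw [← Finset.mul_sum, Finset.sum_comm]
    have : (∑ u : AU, ∑ y' : AY, pU u * pY y' x3 u) = 1 := by
      rw [show (∑ u : AU, ∑ y' : AY, pU u * pY y' x3 u) = ∑ u : AU, pU u by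
        apply Finset.sum_congr rfl
        intro u _
        rw [← Finset.mul_sum, hY x3 u, mul_one], hU]
    rw [this, mul_one]
  have hobsY : ∀ ay : AY,
      obsYgivenX3 pU pX3 pY pX1 pX2 x3 ay = ∑ u, pU u * pY ay x3 u := by
    intro ay
    rw [obsYgivenX3, hnum1, hden1, mul_div_cancel_left₀ _ (hpX3 x3).ne']
  -- obsX2givenYX1 simplifies to pX2
  have hnum2 : ∀ ay : AY, ∀ a2 : A2,
      (∑ a3 : A3, joint pU pX3 pY pX1 pX2 x1 a2 a3 ay)
        = pX2 a2 ay x1 * ∑ a3 : A3, pX3 a3 * ∑ u, pU u * pY ay a3 u * pX1 x1 u := by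
    intro ay a2
    simp only [hjoint]
    rw [Finset.mul_sum]
    apply Finset.sum_congr rfl
    intro a3 _
    ring
  have hcpos : ∀ ay : AY,
      0 < ∑ a3 : A3, pX3 a3 * ∑ u, pU u * pY ay a3 u * pX1 x1 u := by
    intro ay
    apply Finset.sum_pos'
    · intro a3 _
      exact mul_nonneg (hX3pos a3) (hsnn x1 a3 ay)
    · exact ⟨x3, Finset.mem_univ x3,
        mul_pos (hpX3 x3) (hfac x1 x2 x3 ay).2.2⟩
  have hobsX2 : ∀ ay : AY,
      obsX2givenYX1 pU pX3 pY pX1 pX2 x2 ay x1 = pX2 x2 ay x1 := by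
    intro ay
    have hden2 :
        (∑ a3 : A3, ∑ a2 : A2, joint pU pX3 pY pX1 pX2 x1 a2 a3 ay)
          = ∑ a3 : A3, pX3 a3 * ∑ u, pU u * pY ay a3 u * pX1 x1 u := by
      rw [Finset.sum_comm]
      simp only [hnum2]
      rw [← Finset.sum_mul, hX2 ay x1, one_mul]
    rw [obsX2givenYX1, hnum2, hden2,
      mul_div_assoc, div_self (hcpos ay).ne', mul_one]
  -- put it all together
  simp only [hpost, hobsY, hobsX2]
  rw [show (∑ y' : AY, pX3 x3 * pX2 x2 y' x1 * ∑ u, pU u * pY y' x3 u)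
        = pX3 x3 * ∑ y' : AY, pX2 x2 y' x1 * ∑ u, pU u * pY y' x3 u by
      rw [Finset.mul_sum]; apply Finset.sum_congr rfl; intro y' _; ring]
  rw [mul_assoc, mul_div_mul_left _ _ (hpX3 x3).ne']
  congr 1
  · ring
  · apply Finset.sum_congr rfl
    intro y' _
    ring
end

section
/- Let P^(1) and P^(2) be two strictly positive joint distributions over finite-valued variables X1, X2, X3, Y, U that both factorize as P(x1, x2, x3, y, u) = P(u)·P(x3)·P(y|x3, u)·P(x1|u)·P(x2|y, x1), with identical factors P(u), P(x3), P(y|x3,u), P(x2|y,x1) but possibly different mechanisms P^(1)(x1|u) ≠ P^(2)(x1|u). Then the observational marginals satisfy P^(1)(y|x3) = P^(2)(y|x3) and P^(1)(x2|y, x1) = P^(2)(x2|y, x1), and consequently the interventional conditional P(y|x3)·P(x2|y, x1) / Σ_{y'} P(y'|x3)·P(x2|y', x1) computed from observational conditionals is identical under P^(1) and P^(2). In contrast to P(Y|X1, X2, X3), this distribution is stable to shifts in the mechanism of X1. -/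
section Aux

variable {A1 A2 A3 AY AU : Type}
variable [Fintype A1] [Fintype A2] [Fintype A3] [Fintype AY] [Fintype AU]
variable (pU : AU → ℝ) (pX3 : A3 → ℝ) (pY : AY → A3 → AU → ℝ)
variable (pX1 : A1 → AU → ℝ) (pX2 : A2 → AY → A1 → ℝ)

lemma sumX2_joint (hX2 : ∀ y x1, ∑ x2, pX2 x2 y x1 = 1) (x1 : A1) (x3 : A3) (y : AY) :
    ∑ x2, joint pU pX3 pY pX1 pX2 x1 x2 x3 y
      = ∑ u, pU u * pX3 x3 * pY y x3 u * pX1 x1 u := by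
  unfold joint
  rw [Finset.sum_comm]
  refine Finset.sum_congr rfl fun u _ => ?_
  rw [← Finset.mul_sum, hX2, mul_one]

lemma sumX1X2_joint (hX1 : ∀ u, ∑ x1, pX1 x1 u = 1)
    (hX2 : ∀ y x1, ∑ x2, pX2 x2 y x1 = 1) (x3 : A3) (y : AY) :
    ∑ x1, ∑ x2, joint pU pX3 pY pX1 pX2 x1 x2 x3 y
      = ∑ u, pU u * pX3 x3 * pY y x3 u := by
  simp only [sumX2_joint pU pX3 pY pX1 pX2 hX2]
  rw [Finset.sum_comm]
  refine Finset.sum_congr rfl fun u _ => ?_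
  rw [← Finset.mul_sum, hX1, mul_one]

lemma obsY_indep (hY : ∀ x3 u, ∑ y, pY y x3 u = 1)
    (hX1 : ∀ u, ∑ x1, pX1 x1 u = 1)
    (hX2 : ∀ y x1, ∑ x2, pX2 x2 y x1 = 1) (x3 : A3) (y : AY) :
    obsYgivenX3 pU pX3 pY pX1 pX2 x3 y
      = (∑ u, pU u * pX3 x3 * pY y x3 u) / (∑ u, pU u * pX3 x3) := by
  unfold obsYgivenX3
  have hden : (∑ x1 : A1, ∑ x2 : A2, ∑ y' : AY, joint pU pX3 pY pX1 pX2 x1 x2 x3 y')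
      = ∑ u, pU u * pX3 x3 := by
    have : ∀ x1 : A1, (∑ x2 : A2, ∑ y' : AY, joint pU pX3 pY pX1 pX2 x1 x2 x3 y')
        = ∑ y' : AY, ∑ x2 : A2, joint pU pX3 pY pX1 pX2 x1 x2 x3 y' :=
      fun x1 => Finset.sum_comm
    simp only [this]
    rw [Finset.sum_comm]
    calc ∑ y' : AY, ∑ x1, ∑ x2, joint pU pX3 pY pX1 pX2 x1 x2 x3 y'
        = ∑ y' : AY, ∑ u, pU u * pX3 x3 * pY y' x3 u := by
          simp only [sumX1X2_joint pU pX3 pY pX1 pX2 hX1 hX2]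
      _ = ∑ u, ∑ y' : AY, pU u * pX3 x3 * pY y' x3 u := Finset.sum_comm
      _ = ∑ u, pU u * pX3 x3 := by
          refine Finset.sum_congr rfl fun u _ => ?_
          rw [← Finset.mul_sum, hY, mul_one]
  rw [hden, sumX1X2_joint pU pX3 pY pX1 pX2 hX1 hX2]

lemma sumX3_joint (x1 : A1) (x2 : A2) (y : AY) :
    ∑ x3, joint pU pX3 pY pX1 pX2 x1 x2 x3 y
      = (∑ x3, ∑ u, pU u * pX3 x3 * pY y x3 u * pX1 x1 u) * pX2 x2 y x1 := by
  unfold joint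
  rw [Finset.sum_mul]
  refine Finset.sum_congr rfl fun x3 _ => ?_
  rw [Finset.sum_mul]

open scoped Classical in
lemma obsX2_eq (hX2 : ∀ y x1, ∑ x2, pX2 x2 y x1 = 1)
    (hpos : ∀ x1 x2 x3 y, 0 < joint pU pX3 pY pX1 pX2 x1 x2 x3 y)
    (x2 : A2) (y : AY) (x1 : A1) :
    obsX2givenYX1 pU pX3 pY pX1 pX2 x2 y x1
      = if Nonempty A3 then pX2 x2 y x1 else 0 := by
  unfold obsX2givenYX1
  set C := ∑ x3, ∑ u, pU u * pX3 x3 * pY y x3 u * pX1 x1 u with hC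
  have hnum : (∑ x3, joint pU pX3 pY pX1 pX2 x1 x2 x3 y) = C * pX2 x2 y x1 :=
    sumX3_joint pU pX3 pY pX1 pX2 x1 x2 y
  have hden : (∑ x3 : A3, ∑ x2' : A2, joint pU pX3 pY pX1 pX2 x1 x2' x3 y) = C := by
    rw [Finset.sum_comm]
    calc ∑ x2' : A2, ∑ x3, joint pU pX3 pY pX1 pX2 x1 x2' x3 y
        = ∑ x2' : A2, C * pX2 x2' y x1 := by
          simp only [sumX3_joint pU pX3 pY pX1 pX2 x1 _ y]
          rfl
      _ = C := by rw [← Finset.mul_sum, hX2, mul_one]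
  rw [hnum, hden]
  haveI : Nonempty A2 := ⟨x2⟩
  by_cases h3 : Nonempty A3
  · have hCpos : 0 < C := by
      rw [← hden]
      refine Finset.sum_pos (fun x3 _ => Finset.sum_pos (fun x2' _ => hpos _ _ _ _) ?_) ?_
      · exact Finset.univ_nonempty
      · exact Finset.univ_nonempty
    rw [if_pos h3, mul_comm, mul_div_assoc, div_self hCpos.ne', mul_one]
  · have : C = 0 := by
      rw [hC]
      haveI : IsEmpty A3 := not_nonempty_iff.mp h3
      simp
    rw [if_neg h3, this, zero_mul, zero_div]

end Aux

/-- Let `P⁽¹⁾` and `P⁽²⁾` be two strictly positive joint distributions on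
finite-valued `X1, X2, X3, Y, U`, both factorizing as
`P(x1,x2,x3,y,u) = P(u)·P(x3)·P(y|x3,u)·P(x1|u)·P(x2|y,x1)` with identical factors
`P(u), P(x3), P(y|x3,u), P(x2|y,x1)` but possibly different mechanisms
`P⁽¹⁾(x1|u) ≠ P⁽²⁾(x1|u)`. Then the observational marginals satisfy
`P⁽¹⁾(y|x3) = P⁽²⁾(y|x3)` and `P⁽¹⁾(x2|y,x1) = P⁽²⁾(x2|y,x1)`, and consequently the
interventional conditional `P(y|x3)·P(x2|y,x1) / Σ_{y'} P(y'|x3)·P(x2|y',x1)` computed from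
the observational conditionals is identical under `P⁽¹⁾` and `P⁽²⁾`: it is stable to shifts
in the mechanism of `X1`. -/
theorem cidp_functional_stable_to_x1_mechanism_shift
    {A1 A2 A3 AY AU : Type}
    [Fintype A1] [Fintype A2] [Fintype A3] [Fintype AY] [Fintype AU]
    (pU : AU → ℝ) (pX3 : A3 → ℝ) (pY : AY → A3 → AU → ℝ)
    (pX1a pX1b : A1 → AU → ℝ) (pX2 : A2 → AY → A1 → ℝ)
    (hU : ∑ u, pU u = 1) (hX3 : ∑ x3, pX3 x3 = 1)
    (hY : ∀ x3 u, ∑ y, pY y x3 u = 1)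
    (hX1a : ∀ u, ∑ x1, pX1a x1 u = 1) (hX1b : ∀ u, ∑ x1, pX1b x1 u = 1)
    (hX2 : ∀ y x1, ∑ x2, pX2 x2 y x1 = 1)
    (hUpos : ∀ u, 0 ≤ pU u) (hX3pos : ∀ x3, 0 ≤ pX3 x3)
    (hYpos : ∀ y x3 u, 0 ≤ pY y x3 u)
    (hX1apos : ∀ x1 u, 0 ≤ pX1a x1 u) (hX1bpos : ∀ x1 u, 0 ≤ pX1b x1 u)
    (hX2pos : ∀ x2 y x1, 0 ≤ pX2 x2 y x1)
    (hposa : ∀ x1 x2 x3 y, 0 < joint pU pX3 pY pX1a pX2 x1 x2 x3 y)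
    (hposb : ∀ x1 x2 x3 y, 0 < joint pU pX3 pY pX1b pX2 x1 x2 x3 y) :
    (∀ x3 y, obsYgivenX3 pU pX3 pY pX1a pX2 x3 y = obsYgivenX3 pU pX3 pY pX1b pX2 x3 y) ∧
    (∀ x2 y x1, obsX2givenYX1 pU pX3 pY pX1a pX2 x2 y x1 =
      obsX2givenYX1 pU pX3 pY pX1b pX2 x2 y x1) ∧
    (∀ x1 x2 x3 y,
      obsYgivenX3 pU pX3 pY pX1a pX2 x3 y * obsX2givenYX1 pU pX3 pY pX1a pX2 x2 y x1 /
          (∑ y' : AY, obsYgivenX3 pU pX3 pY pX1a pX2 x3 y' *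
            obsX2givenYX1 pU pX3 pY pX1a pX2 x2 y' x1) =
        obsYgivenX3 pU pX3 pY pX1b pX2 x3 y * obsX2givenYX1 pU pX3 pY pX1b pX2 x2 y x1 /
          (∑ y' : AY, obsYgivenX3 pU pX3 pY pX1b pX2 x3 y' *
            obsX2givenYX1 pU pX3 pY pX1b pX2 x2 y' x1)) := by
  have h1 : ∀ x3 y, obsYgivenX3 pU pX3 pY pX1a pX2 x3 y = obsYgivenX3 pU pX3 pY pX1b pX2 x3 y := by
    intro x3 y
    rw [obsY_indep pU pX3 pY pX1a pX2 hY hX1a hX2,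
        obsY_indep pU pX3 pY pX1b pX2 hY hX1b hX2]
  have h2 : ∀ x2 y x1, obsX2givenYX1 pU pX3 pY pX1a pX2 x2 y x1 =
      obsX2givenYX1 pU pX3 pY pX1b pX2 x2 y x1 := by
    intro x2 y x1
    rw [obsX2_eq pU pX3 pY pX1a pX2 hX2 hposa,
        obsX2_eq pU pX3 pY pX1b pX2 hX2 hposb]
  refine ⟨h1, h2, fun x1 x2 x3 y => ?_⟩
  simp only [h1, h2]
end
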